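/- Let (A_k)_{k≥1} be a nonnegative real sequence and K a positive integer such that A_k ≤ A_{k−1} ≤ 1 for all k ≥ K + 1. Suppose there are positive constants α, β, γ with 0 < γ < 1 such that A_k ≤ α (A_{k−1} − A_k)^γ + β (A_{k−1} − A_k) for all k ≥ K + 1. Then there exists a positive constant ν such that A_k ≤ ν (k − K)^{−γ/(1−γ)} for all k > K. -/

import Mathlib

lemma aux_convex {q x y : ℝ} (hq : 0 < q) (hx : 0 < x) (hxy : x ≤ y) :
    y ^ (-q) + q * y ^ (-(q+1)) * (y - x) ≤ x ^ (-q) := by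
  have hy : 0 < y := hx.trans_le hxy
  have hs : (0:ℝ) ≤ (y - x)/x := div_nonneg (by linarith) hx.le
  have hB := one_add_mul_self_le_rpow_one_add (by linarith : (-1:ℝ) ≤ (y-x)/x)
    (by linarith : (1:ℝ) ≤ q + 1)
  have h1s : 1 + (y - x)/x = y / x := by field_simp; ring
  rw [h1s, Real.div_rpow hy.le hx.le] at hB
  have hxq : (0:ℝ) < x ^ (q+1) := Real.rpow_pos_of_pos hx _
  have hyq : (0:ℝ) < y ^ (q+1) := Real.rpow_pos_of_pos hy _
  have hxq' : (0:ℝ) < x ^ q := Real.rpow_pos_of_pos hx _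
  have hyq' : (0:ℝ) < y ^ q := Real.rpow_pos_of_pos hy _
  have exq : x ^ (q+1) = x ^ q * x := by rw [Real.rpow_add hx, Real.rpow_one]
  have eyq : y ^ (q+1) = y ^ q * y := by rw [Real.rpow_add hy, Real.rpow_one]
  have hB' : (1 + (q+1) * ((y-x)/x)) * x ^ (q+1) ≤ y ^ (q+1) := by
    rw [← le_div_iff₀ hxq]; exact hB
  have claim : x ^ q * x + (q+1) * (y - x) * x ^ q ≤ y ^ q * y := by
    rw [exq, eyq] at hB'
    have : (1 + (q+1) * ((y-x)/x)) * (x ^ q * x) = x ^ q * x + (q+1)*(y-x)*x^q := by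
      field_simp
    linarith [hB', this]
  rw [Real.rpow_neg hy.le, Real.rpow_neg hy.le, Real.rpow_neg hx.le, eyq]
  rw [← sub_nonneg]
  have key : (x ^ q)⁻¹ - ((y ^ q)⁻¹ + q * (y ^ q * y)⁻¹ * (y - x))
      = (y ^ q * y - (x ^ q * y + q * (y - x) * x ^ q)) / (x ^ q * (y ^ q * y)) := by
    field_simp
  rw [key]
  apply div_nonneg _ (by positivity)
  nlinarith [claim]

/-- Lemma 2.3, item 2 (`0 < γ < 1`): sublinear convergence of the sequence. -/
theorem rate_lemma_sublinear
    (A : ℕ → ℝ) (K : ℕ) (hK : 1 ≤ K)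
    (hA : ∀ k, 0 ≤ A k)
    (hmono : ∀ k, K + 1 ≤ k → A k ≤ A (k - 1) ∧ A (k - 1) ≤ 1)
    (α β γ : ℝ) (hα : 0 < α) (hβ : 0 < β) (hγ0 : 0 < γ) (hγ1 : γ < 1)
    (hcond : ∀ k, K + 1 ≤ k → A k ≤ α * (A (k - 1) - A k) ^ γ + β * (A (k - 1) - A k)) :
    ∃ ν : ℝ, 0 < ν ∧ ∀ k, K < k →
      A k ≤ ν * ((k : ℝ) - (K : ℝ)) ^ (-(γ / (1 - γ))) := by
  have hαβ : 0 < α + β := by linarith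
  set q : ℝ := (1 - γ)/γ with hq_def
  have hq : 0 < q := div_pos (by linarith) hγ0
  have hγq : 1/γ = 1 + q := by rw [hq_def]; field_simp; ring
  set C : ℝ := (α + β) ^ (1/γ) with hC_def
  have hCpos : 0 < C := Real.rpow_pos_of_pos hαβ _
  have h2q1 : (0:ℝ) < 2 ^ (-(1+q)) := Real.rpow_pos_of_pos two_pos _
  have h2q : (2:ℝ) ^ (-q) < 1 :=
    Real.rpow_lt_one_of_one_lt_of_neg one_lt_two (by linarith)
  set c : ℝ := min (q * 2 ^ (-(1+q)) / C) (1 - 2 ^ (-q)) with hc_def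
  have hcpos : 0 < c := lt_min (by positivity) (by linarith)
  -- key step
  have step : ∀ n : ℕ, 0 < A (K + n + 1) →
      A (K + n) ^ (-q) + c ≤ A (K + n + 1) ^ (-q) := by
    intro n hx
    have hk : K + 1 ≤ K + n + 1 := by omega
    have hk1 : K + n + 1 - 1 = K + n := by omega
    obtain ⟨hm1, hm2⟩ := hmono (K + n + 1) hk
    have hcd := hcond (K + n + 1) hk
    rw [hk1] at hm1 hm2 hcd
    set x := A (K + n + 1) with hxd
    set y := A (K + n) with hyd
    have hy : 0 < y := hx.trans_le hm1
    have hd0 : 0 ≤ y - x := by linarith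
    have hdpos : 0 < y - x := by
      rcases lt_or_eq_of_le hd0 with h | h
      · exact h
      · exfalso
        rw [← h, Real.zero_rpow hγ0.ne'] at hcd
        simp at hcd; linarith
    have hd1 : y - x ≤ 1 := by have := hA (K + n + 1); rw [← hxd] at this; linarith
    have hdle : y - x ≤ (y - x) ^ γ := by
      calc y - x = (y - x) ^ (1:ℝ) := (Real.rpow_one _).symm
        _ ≤ (y - x) ^ γ := Real.rpow_le_rpow_of_exponent_ge hdpos hd1 hγ1.le
    have h1 : x ≤ (α + β) * (y - x) ^ γ := by nlinarith
    have h2 : x ^ (1 + q) ≤ C * (y - x) := by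
      rw [← hγq]
      calc x ^ (1/γ) ≤ ((α + β) * (y - x) ^ γ) ^ (1/γ) :=
            Real.rpow_le_rpow (hA _) h1 (by positivity)
        _ = C * ((y - x) ^ γ) ^ (1/γ) := Real.mul_rpow hαβ.le (Real.rpow_nonneg hd0 _)
        _ = C * (y - x) := by
            rw [← Real.rpow_mul hd0, mul_one_div_cancel hγ0.ne', Real.rpow_one]
    have hxq1 : (0:ℝ) < x ^ (1 + q) := Real.rpow_pos_of_pos hx _
    by_cases hcase : y ≤ 2 * x
    · have hconv := aux_convex hq hx hm1
      have hcle : c ≤ q * 2 ^ (-(1+q)) / C := min_le_left _ _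
      suffices h : q * 2 ^ (-(1+q)) / C ≤ q * y ^ (-(q+1)) * (y - x) by linarith
      have hyb : (2 * x) ^ (-(q+1)) ≤ y ^ (-(q+1)) :=
        Real.rpow_le_rpow_of_nonpos hy hcase (by linarith)
      have h2x : (2 * x) ^ (-(q+1)) = 2 ^ (-(q+1)) * x ^ (-(q+1)) :=
        Real.mul_rpow (by norm_num) hx.le
      have hxinv : x ^ (-(q+1)) * x ^ (1+q) = 1 := by
        rw [← Real.rpow_add hx, show -(q+1) + (1+q) = 0 by ring, Real.rpow_zero]
      have hdge : x ^ (1+q) / C ≤ y - x := by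
        rw [div_le_iff₀ hCpos]; linarith [h2]
      have hxq1' : (0:ℝ) < x ^ (-(q+1)) := Real.rpow_pos_of_pos hx _
      calc q * 2 ^ (-(1+q)) / C
          = q * (2 ^ (-(q+1)) * x ^ (-(q+1))) * (x ^ (1+q) / C) := by
            rw [show -(1+q) = -(q+1) by ring,
              show q * (2 ^ (-(q+1)) * x ^ (-(q+1))) * (x ^ (1+q) / C)
                = q * 2 ^ (-(q+1)) * (x ^ (-(q+1)) * x ^ (1+q)) / C by ring,
              hxinv, mul_one]
        _ ≤ q * y ^ (-(q+1)) * (x ^ (1+q) / C) := by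
            apply mul_le_mul_of_nonneg_right _ (by positivity)
            rw [← h2x]
            exact mul_le_mul_of_nonneg_left hyb hq.le
        _ ≤ q * y ^ (-(q+1)) * (y - x) := by
            apply mul_le_mul_of_nonneg_left hdge
            positivity
    · push_neg at hcase
      have hcle : c ≤ 1 - 2 ^ (-q) := min_le_right _ _
      have hyb : y ^ (-q) ≤ (2 * x) ^ (-q) :=
        Real.rpow_le_rpow_of_nonpos (by linarith) hcase.le (by linarith)
      have h2x : (2 * x) ^ (-q) = 2 ^ (-q) * x ^ (-q) :=
        Real.mul_rpow (by norm_num) hx.le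
      have hx1 : x ≤ 1 := hm1.trans hm2
      have hxg1 : 1 ≤ x ^ (-q) :=
        Real.one_le_rpow_of_pos_of_le_one_of_nonpos hx hx1 (by linarith)
      nlinarith [hyb, h2x, hxg1, h2q, hcle]
  -- induction
  have main : ∀ n : ℕ, 0 < A (K + n) → 1 + c * n ≤ A (K + n) ^ (-q) := by
    intro n
    induction n with
    | zero =>
      intro h
      have hAK : A K ≤ 1 := by
        have := (hmono (K + 1) le_rfl).2
        simpa using this
      have : 1 ≤ A K ^ (-q) :=
        Real.one_le_rpow_of_pos_of_le_one_of_nonpos (by simpa using h) (by simpa using hAK)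
          (by linarith)
      simpa using this
    | succ n ih =>
      intro hpos
      have hk : K + 1 ≤ K + n + 1 := by omega
      have hk1 : K + n + 1 - 1 = K + n := by omega
      have hm1 := (hmono (K + n + 1) hk).1
      rw [hk1] at hm1
      have hpos' : 0 < A (K + n + 1) := hpos
      have hy : 0 < A (K + n) := hpos'.trans_le hm1
      have hstep := step n hpos'
      have hih := ih hy
      have e : K + (n + 1) = K + n + 1 := by omega
      rw [e]
      push_cast
      linarith
  -- conclusion
  refine ⟨c ^ (-(γ / (1 - γ))), Real.rpow_pos_of_pos hcpos _, ?_⟩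
  intro k hk
  set n : ℕ := k - K with hn_def
  have hkn : k = K + n := by omega
  have hn1 : 1 ≤ n := by omega
  have hcast : ((k : ℝ) - (K : ℝ)) = (n : ℝ) := by
    rw [hkn]; push_cast; ring
  have hnpos : (0:ℝ) < n := by exact_mod_cast hn1
  rcases (hA k).eq_or_lt with h0 | hpos
  · rw [← h0]
    have : (0:ℝ) < ((k : ℝ) - (K : ℝ)) ^ (-(γ / (1 - γ))) := by
      rw [hcast]; exact Real.rpow_pos_of_pos hnpos _
    positivity
  · have hm := main n (by rwa [← hkn])
    rw [← hkn] at hm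
    have hcn : 0 < c * n := by positivity
    have h1 : c * (n : ℝ) ≤ A k ^ (-q) := by linarith
    have hinvq : -(1/q) = -(γ / (1 - γ)) := by
      rw [hq_def, one_div_div]
    have hAk : A k = (A k ^ (-q)) ^ (-(1/q)) := by
      rw [← Real.rpow_mul (hA k)]
      rw [show (-q) * (-(1/q)) = 1 by field_simp]
      rw [Real.rpow_one]
    rw [hAk]
    calc (A k ^ (-q)) ^ (-(1/q)) ≤ (c * n) ^ (-(1/q)) :=
          Real.rpow_le_rpow_of_nonpos hcn h1 (neg_nonpos.mpr (by positivity))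
      _ = c ^ (-(1/q)) * (n : ℝ) ^ (-(1/q)) := Real.mul_rpow hcpos.le (by positivity)
      _ = c ^ (-(γ / (1 - γ))) * ((k : ℝ) - (K : ℝ)) ^ (-(γ / (1 - γ))) := by
          rw [hinvq, hcast]
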